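/- Let L* ∈ R^{n1×n2} have rank r with smallest positive singular value σ_r*, let Z* = [U*; V*] be its balanced SVD factorization, and let Z = [U; V] be perfectly balanced, i.e. ‖UᵀU − VᵀV‖_F = 0. Then d_P(Z, Z*) ≤ (√(2r)/√((√2 − 1)·σ_r*)) · ‖UVᵀ − L*‖_op. -/

import Mathlib

set_option linter.unusedSectionVars false
set_option maxHeartbeats 1000000


open Matrix

noncomputable def opNorm {m n : Type*} [Fintype m] [Fintype n] [DecidableEq n]
    (A : Matrix m n ℝ) : ℝ :=
  ‖LinearMap.toContinuousLinearMap (Matrix.toEuclideanLin A)‖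

noncomputable def frob {m n : Type*} [Fintype m] [Fintype n] (A : Matrix m n ℝ) : ℝ :=
  Real.sqrt (∑ i, ∑ j, (A i j) ^ 2)

noncomputable def frobS {n1 n2 : ℕ} (S : Finset (Fin n1 × Fin n2))
    (A : Matrix (Fin n1) (Fin n2) ℝ) : ℝ :=
  Real.sqrt (∑ p ∈ S, (A p.1 p.2) ^ 2)

noncomputable def dP {m : Type*} [Fintype m] {r : ℕ}
    (Z Z' : Matrix m (Fin r) ℝ) : ℝ :=
  sInf { d | ∃ P : Matrix (Fin r) (Fin r) ℝ, Pᵀ * P = 1 ∧ d = frob (Z - Z' * P) }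


open Filter Topology

namespace ProcrustesAux

variable {m n : Type*} [Fintype m] [Fintype n] [DecidableEq m] [DecidableEq n]

noncomputable def e2 (A : Matrix m n ℝ) : ℝ := Matrix.trace (Aᵀ * A)

lemma e2_eq_sum (A : Matrix m n ℝ) : e2 A = ∑ i, ∑ j, (A i j) ^ 2 := by
  rw [e2, Matrix.trace]
  simp only [Matrix.diag, Matrix.mul_apply, Matrix.transpose_apply, sq]
  exact Finset.sum_comm ..

lemma e2_nonneg (A : Matrix m n ℝ) : 0 ≤ e2 A := by
  rw [e2_eq_sum]
  exact Finset.sum_nonneg fun i _ => Finset.sum_nonneg fun j _ => sq_nonneg _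

lemma frob_eq (A : Matrix m n ℝ) : frob A = Real.sqrt (e2 A) := by
  rw [frob, e2_eq_sum]

lemma frob_nonneg (A : Matrix m n ℝ) : 0 ≤ frob A := Real.sqrt_nonneg _

lemma eq_zero_of_frob_eq_zero {A : Matrix m n ℝ} (h : frob A = 0) : A = 0 := by
  rw [frob_eq] at h
  have h2 : e2 A = 0 := by
    have := Real.sqrt_eq_zero (e2_nonneg A) |>.mp h
    exact this
  rw [e2_eq_sum] at h2
  ext i j
  have h3 := (Finset.sum_eq_zero_iff_of_nonneg
    (fun i _ => Finset.sum_nonneg fun j _ => sq_nonneg (A i j))).mp h2 i (Finset.mem_univ i)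
  have h4 := (Finset.sum_eq_zero_iff_of_nonneg (fun j _ => sq_nonneg (A i j))).mp h3 j
    (Finset.mem_univ j)
  simpa using pow_eq_zero_iff (n := 2) (by norm_num) |>.mp h4

lemma e2_transpose (A : Matrix m n ℝ) : e2 Aᵀ = e2 A := by
  rw [e2, e2, Matrix.transpose_transpose, Matrix.trace_mul_comm]

lemma trace_CS (A B : Matrix m n ℝ) :
    (Matrix.trace (Aᵀ * B)) ^ 2 ≤ e2 A * e2 B := by
  have h1 : Matrix.trace (Aᵀ * B) = ∑ ij : m × n, A ij.1 ij.2 * B ij.1 ij.2 := by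
    rw [Matrix.trace]
    simp only [Matrix.diag, Matrix.mul_apply, Matrix.transpose_apply]
    rw [Fintype.sum_prod_type]
    exact Finset.sum_comm ..
  have h2 : e2 A = ∑ ij : m × n, (A ij.1 ij.2) ^ 2 := by
    rw [e2_eq_sum, Fintype.sum_prod_type]
  have h3 : e2 B = ∑ ij : m × n, (B ij.1 ij.2) ^ 2 := by
    rw [e2_eq_sum, Fintype.sum_prod_type]
  rw [h1, h2, h3]
  exact Finset.sum_mul_sq_le_sq_mul_sq Finset.univ _ _

lemma posSemidef_transpose_mul_self (A : Matrix m n ℝ) : (Aᵀ * A).PosSemidef := by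
  have := Matrix.posSemidef_conjTranspose_mul_self A
  rwa [Matrix.conjTranspose_eq_transpose_of_trivial] at this

lemma trace_mul_psd_nonneg {A B : Matrix n n ℝ} (hA : A.PosSemidef) (hB : B.PosSemidef) :
    0 ≤ Matrix.trace (A * B) := by
  open scoped MatrixOrder in obtain ⟨A1, hA1⟩ := CStarAlgebra.nonneg_iff_eq_star_mul_self.mp hA.nonneg
  open scoped MatrixOrder in obtain ⟨B1, hB1⟩ := CStarAlgebra.nonneg_iff_eq_star_mul_self.mp hB.nonneg
  rw [Matrix.star_eq_conjTranspose, Matrix.conjTranspose_eq_transpose_of_trivial] at hA1 hB1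
  subst hA1; subst hB1
  have key : Matrix.trace ((A1ᵀ * A1) * (B1ᵀ * B1)) = e2 (A1 * B1ᵀ) := by
    rw [e2, Matrix.transpose_mul, Matrix.transpose_transpose]
    have e1 : (A1ᵀ * A1) * (B1ᵀ * B1) = A1ᵀ * (A1 * B1ᵀ) * B1 := by
      simp [Matrix.mul_assoc]
    rw [e1, Matrix.trace_mul_cycle]
  rw [key]
  exact e2_nonneg _

lemma trace_mul_diagonal' (M : Matrix n n ℝ) (d : n → ℝ) :
    Matrix.trace (M * Matrix.diagonal d) = ∑ i, M i i * d i := by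
  rw [Matrix.trace]
  simp [Matrix.diag, Matrix.mul_diagonal]

open scoped Matrix.Norms.L2Operator

lemma opNorm_eq_norm (A : Matrix m n ℝ) : opNorm A = ‖A‖ := rfl

lemma opNorm_nonneg (A : Matrix m n ℝ) : 0 ≤ opNorm A := by
  rw [opNorm_eq_norm]; exact norm_nonneg _

lemma e2_le_rank_mul (A : Matrix m n ℝ) : e2 A ≤ A.rank * (opNorm A) ^ 2 := by
  classical
  have hM : (Aᵀ * A).PosSemidef := posSemidef_transpose_mul_self A
  have hHerm : (Aᵀ * A).IsHermitian := hM.1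
  have htr : e2 A = ∑ i, hHerm.eigenvalues i := by
    rw [e2]
    conv_lhs => rw [hHerm.spectral_theorem, Unitary.conjStarAlgAut_apply]
    rw [Matrix.trace_mul_cycle,
      Unitary.coe_star_mul_self, Matrix.one_mul,
      Matrix.trace_diagonal]
    simp
  have hbound : ∀ i, hHerm.eigenvalues i ≤ (opNorm A) ^ 2 := by
    intro i
    have hv := hHerm.mulVec_eigenvectorBasis i
    have hnv : ‖hHerm.eigenvectorBasis i‖ = 1 := hHerm.eigenvectorBasis.orthonormal.1 i
    have hle := Matrix.l2_opNorm_mulVec (Aᵀ * A) (hHerm.eigenvectorBasis i)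
    rw [hnv, mul_one] at hle
    have hnorm : ‖(EuclideanSpace.equiv n ℝ).symm ((Aᵀ * A) *ᵥ (hHerm.eigenvectorBasis i))‖
        = |hHerm.eigenvalues i| := by
      have h2 : (EuclideanSpace.equiv n ℝ).symm ((Aᵀ * A) *ᵥ (hHerm.eigenvectorBasis i))
          = hHerm.eigenvalues i • (hHerm.eigenvectorBasis i) := by
        ext j
        simpa using congrFun hv j
      rw [h2, norm_smul, hnv, mul_one, Real.norm_eq_abs]
    rw [hnorm] at hle
    have hAA : ‖Aᵀ * A‖ = ‖A‖ * ‖A‖ := by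
      have := Matrix.l2_opNorm_conjTranspose_mul_self A
      rwa [Matrix.conjTranspose_eq_transpose_of_trivial] at this
    calc hHerm.eigenvalues i ≤ |hHerm.eigenvalues i| := le_abs_self _
      _ ≤ ‖Aᵀ * A‖ := hle
      _ = (opNorm A) ^ 2 := by rw [hAA, opNorm_eq_norm, sq]
  have hcard : A.rank = Fintype.card {i // hHerm.eigenvalues i ≠ 0} := by
    rw [← hHerm.rank_eq_card_non_zero_eigs]
    conv_lhs => rw [← Matrix.rank_transpose_mul_self A]
  have hnn : ∀ i, 0 ≤ hHerm.eigenvalues i := hM.eigenvalues_nonneg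
  have hsum : ∑ i, hHerm.eigenvalues i
      ≤ (Fintype.card {i // hHerm.eigenvalues i ≠ 0}) * (opNorm A) ^ 2 := by
    classical
    rw [Fintype.card_subtype]
    rw [← Finset.sum_filter_add_sum_filter_not Finset.univ (fun i => hHerm.eigenvalues i ≠ 0)]
    have hzero : ∑ i ∈ Finset.univ.filter (fun i => ¬ hHerm.eigenvalues i ≠ 0),
        hHerm.eigenvalues i = 0 := by
      apply Finset.sum_eq_zero
      intro i hi
      simpa using (Finset.mem_filter.mp hi).2
    rw [hzero, add_zero]
    calc ∑ i ∈ Finset.univ.filter (fun i => hHerm.eigenvalues i ≠ 0), hHerm.eigenvalues i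
        ≤ ∑ _i ∈ Finset.univ.filter (fun i => hHerm.eigenvalues i ≠ 0), (opNorm A) ^ 2 :=
          Finset.sum_le_sum fun i _ => hbound i
      _ = (Finset.univ.filter (fun i => hHerm.eigenvalues i ≠ 0)).card * (opNorm A) ^ 2 := by
          rw [Finset.sum_const, nsmul_eq_mul]
  rw [htr, hcard]
  exact hsum

lemma rank_sub_le (A B : Matrix m n ℝ) : (A - B).rank ≤ A.rank + B.rank := by
  have hr : LinearMap.range (A - B).mulVecLin ≤
      LinearMap.range A.mulVecLin ⊔ LinearMap.range B.mulVecLin := by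
    rintro x ⟨y, rfl⟩
    rw [Matrix.mulVecLin_apply, Matrix.sub_mulVec]
    exact Submodule.sub_mem _
      (Submodule.mem_sup_left ⟨y, by simp [Matrix.mulVecLin_apply]⟩)
      (Submodule.mem_sup_right ⟨y, by simp [Matrix.mulVecLin_apply]⟩)
  calc (A - B).rank
      ≤ Module.finrank ℝ
        (LinearMap.range A.mulVecLin ⊔ LinearMap.range B.mulVecLin : Submodule ℝ (m → ℝ)) :=
        Submodule.finrank_mono hr
    _ ≤ A.rank + B.rank := Submodule.finrank_add_le_finrank_add_finrank _ _

/-- polar decomposition, invertible case -/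
lemma exists_polar_of_isUnit {r : ℕ} (M : Matrix (Fin r) (Fin r) ℝ) (hM : IsUnit M.det) :
    ∃ P : Matrix (Fin r) (Fin r) ℝ, Pᵀ * P = 1 ∧ (M * P).PosSemidef := by
  have hMM : (M * Mᵀ).PosSemidef := by
    have := Matrix.posSemidef_self_mul_conjTranspose M
    rwa [Matrix.conjTranspose_eq_transpose_of_trivial] at this
  open scoped MatrixOrder in set H := CFC.sqrt (M * Mᵀ) with hHdef
  open scoped MatrixOrder in have hH : H.PosSemidef := (CFC.sqrt_nonneg _).posSemidef
  open scoped MatrixOrder in have hH2 : H * H = M * Mᵀ := CFC.sqrt_mul_sqrt_self _ hMM.nonneg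
  have hHsymm : Hᵀ = H := by
    have h : Hᴴ = H := hH.1
    rwa [Matrix.conjTranspose_eq_transpose_of_trivial] at h
  have hdetH : IsUnit H.det := by
    have h1 : H.det * H.det = M.det * M.det := by
      rw [← Matrix.det_mul, hH2, Matrix.det_mul, Matrix.det_transpose]
    have : IsUnit (H.det * H.det) := h1 ▸ hM.mul hM
    exact isUnit_of_mul_isUnit_left this
  refine ⟨M⁻¹ * H, ?_, ?_⟩
  · rw [Matrix.transpose_mul, hHsymm, Matrix.transpose_nonsing_inv]
    have e1 : H * (Mᵀ)⁻¹ * (M⁻¹ * H) = H * ((Mᵀ)⁻¹ * M⁻¹) * H := by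
      simp [Matrix.mul_assoc]
    rw [e1, ← Matrix.mul_inv_rev, ← hH2, Matrix.mul_inv_rev]
    rw [show H * (H⁻¹ * H⁻¹) * H = (H * H⁻¹) * (H⁻¹ * H) by simp [Matrix.mul_assoc],
      Matrix.mul_nonsing_inv _ hdetH, Matrix.nonsing_inv_mul _ hdetH, Matrix.one_mul]
  · rw [← Matrix.mul_assoc, Matrix.mul_nonsing_inv _ hM, Matrix.one_mul]
    exact hH

lemma charpoly_eval {r : ℕ} (N : Matrix (Fin r) (Fin r) ℝ) (t : ℝ) :
    (N.charpoly).eval t = (t • (1 : Matrix (Fin r) (Fin r) ℝ) - N).det := by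
  rw [Matrix.charpoly, ← Polynomial.coe_evalRingHom, RingHom.map_det]
  congr 1
  ext i j
  by_cases h : i = j
  · subst h
    simp [Matrix.charmatrix_apply_eq, Matrix.one_apply]
  · simp [Matrix.charmatrix_apply_ne _ _ _ h, Matrix.one_apply, h]

/-- polar decomposition, general case -/
lemma exists_polar {r : ℕ} (N : Matrix (Fin r) (Fin r) ℝ) :
    ∃ P : Matrix (Fin r) (Fin r) ℝ, Pᵀ * P = 1 ∧ (N * P).PosSemidef := by
  -- finitely many bad t
  have hfin : {t : ℝ | (N - t • 1).det = 0}.Finite := by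
    apply Set.Finite.subset (Polynomial.finite_setOf_isRoot (N.charpoly_monic.ne_zero))
    intro t ht
    simp only [Set.mem_setOf_eq] at ht ⊢
    rw [Polynomial.IsRoot, charpoly_eval]
    rw [show t • (1 : Matrix (Fin r) (Fin r) ℝ) - N = -(N - t • 1) from (neg_sub _ _).symm,
      Matrix.det_neg, ht, mul_zero]
  -- a sequence of good t tending to 0
  have hex : ∀ k : ℕ, ∃ t : ℝ, t ∈ Set.Ioo (0:ℝ) (1/((k:ℝ)+1)) \ {t : ℝ | (N - t • 1).det = 0} := by
    intro k
    apply Set.Infinite.nonempty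
    apply Set.Infinite.diff _ hfin
    exact Set.Ioo_infinite (by positivity : (0:ℝ) < 1/((k:ℝ)+1))
  choose t ht using hex
  have htend : Tendsto t atTop (𝓝 0) := by
    apply tendsto_of_tendsto_of_tendsto_of_le_of_le tendsto_const_nhds
      tendsto_one_div_add_atTop_nhds_zero_nat
      (fun k => ((ht k).1.1).le) (fun k => ((ht k).1.2).le)
  have hunit : ∀ k, IsUnit (N - t k • 1).det := by
    intro k
    rw [isUnit_iff_ne_zero]
    exact (ht k).2
  choose P hP1 hP2 using fun k => exists_polar_of_isUnit (N - t k • 1) (hunit k)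
  -- compactness of the orthogonal set, in the pi topology
  set K : Set (Matrix (Fin r) (Fin r) ℝ) := {P | Pᵀ * P = 1} with hKdef
  have hKclosed : IsClosed K := by
    apply isClosed_eq _ continuous_const
    exact Continuous.matrix_mul (Continuous.matrix_transpose continuous_id) continuous_id
  have hKsub : K ⊆ Set.pi Set.univ (fun _ : Fin r => Set.pi Set.univ
      fun _ : Fin r => Set.Icc (-1:ℝ) 1) := by
    intro Q hQ
    refine Set.mem_univ_pi.mpr fun i => Set.mem_univ_pi.mpr fun j => ?_
    have hdiag : ∑ a, Q a j * Q a j = 1 := by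
      have h := congrFun (congrFun hQ j) j
      simp only [Matrix.mul_apply, Matrix.transpose_apply, Matrix.one_apply_eq] at h
      exact h
    have h1 : Q i j * Q i j ≤ 1 := by
      rw [← hdiag]
      exact Finset.single_le_sum (fun a _ => mul_self_nonneg (Q a j)) (Finset.mem_univ i)
    exact Set.mem_Icc.mpr (abs_le.mp (abs_le_one_iff_mul_self_le_one.mpr h1))
  have hScompact : IsCompact (Set.pi Set.univ (fun _ : Fin r => Set.pi Set.univ
      fun _ : Fin r => Set.Icc (-1:ℝ) 1) : Set (Matrix (Fin r) (Fin r) ℝ)) :=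
    isCompact_univ_pi fun _ => isCompact_univ_pi fun _ => isCompact_Icc
  have hKcompact : IsCompact K := hScompact.of_isClosed_subset hKclosed hKsub
  letI : FirstCountableTopology (Matrix (Fin r) (Fin r) ℝ) :=
    inferInstanceAs (FirstCountableTopology (Fin r → Fin r → ℝ))
  obtain ⟨Pl, hPlK, φ, hφ, hPconv⟩ := hKcompact.tendsto_subseq hP1
  refine ⟨Pl, hPlK, ?_⟩
  have htphi : Tendsto (fun k => t (φ k)) atTop (𝓝 0) := htend.comp hφ.tendsto_atTop
  have hNconv : Tendsto (fun k => N - t (φ k) • (1 : Matrix (Fin r) (Fin r) ℝ)) atTop (𝓝 N) := by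
    have h2 : Tendsto (fun k => t (φ k) • (1 : Matrix (Fin r) (Fin r) ℝ)) atTop
        (𝓝 ((0:ℝ) • (1 : Matrix (Fin r) (Fin r) ℝ))) := htphi.smul_const 1
    simpa using tendsto_const_nhds.sub h2
  have hG : Tendsto (fun k => (N - t (φ k) • 1) * P (φ k)) atTop (𝓝 (N * Pl)) := by
    have hc : Continuous fun p : Matrix (Fin r) (Fin r) ℝ × Matrix (Fin r) (Fin r) ℝ => p.1 * p.2 :=
      Continuous.matrix_mul continuous_fst continuous_snd
    exact (hc.tendsto (N, Pl)).comp (hNconv.prodMk_nhds hPconv)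
  rw [Matrix.posSemidef_iff_dotProduct_mulVec]
  constructor
  · show (N * Pl)ᴴ = N * Pl
    rw [Matrix.conjTranspose_eq_transpose_of_trivial]
    have hc : Continuous fun M : Matrix (Fin r) (Fin r) ℝ => Mᵀ :=
      Continuous.matrix_transpose continuous_id
    have h1 : Tendsto (fun k => ((N - t (φ k) • 1) * P (φ k))ᵀ) atTop (𝓝 ((N * Pl)ᵀ)) :=
      (hc.tendsto _).comp hG
    have h2 : (fun k => ((N - t (φ k) • 1) * P (φ k))ᵀ)
        = fun k => (N - t (φ k) • 1) * P (φ k) := by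
      funext k
      have h : ((N - t (φ k) • 1) * P (φ k))ᴴ = (N - t (φ k) • 1) * P (φ k) := (hP2 (φ k)).1
      rwa [Matrix.conjTranspose_eq_transpose_of_trivial] at h
    rw [h2] at h1
    exact tendsto_nhds_unique h1 hG
  · intro x
    have hc : Continuous fun M : Matrix (Fin r) (Fin r) ℝ => star x ⬝ᵥ M *ᵥ x :=
      Continuous.dotProduct continuous_const
        (Continuous.matrix_mulVec continuous_id continuous_const)
    have hq : ∀ k, (0:ℝ) ≤ star x ⬝ᵥ ((N - t (φ k) • 1) * P (φ k)) *ᵥ x :=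
      fun k => (hP2 (φ k)).dotProduct_mulVec_nonneg x
    exact ge_of_tendsto' ((hc.tendsto _).comp hG) hq

lemma trace4 {α β γ δ : Type*} [Fintype α] [Fintype β] [Fintype γ] [Fintype δ]
    (X : Matrix α β ℝ) (Y : Matrix γ β ℝ) (W : Matrix γ δ ℝ) (T : Matrix α δ ℝ) :
    Matrix.trace (X * Yᵀ * (W * Tᵀ)) = Matrix.trace ((Tᵀ * X) * (Yᵀ * W)) := by
  rw [show X * Yᵀ * (W * Tᵀ) = X * (Yᵀ * (W * Tᵀ)) from by simp [Matrix.mul_assoc],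
    Matrix.trace_mul_comm,
    show Yᵀ * (W * Tᵀ) * X = (Yᵀ * W) * (Tᵀ * X) from by simp [Matrix.mul_assoc],
    Matrix.trace_mul_comm]

lemma gjz_scalar (a b g h w s2 : ℝ) (ha : 0 ≤ a) (hb : 0 ≤ b) (hh : 0 ≤ h)
    (hg : g = h - w) (hcs : g ^ 2 ≤ a * b) (hs2 : s2 ^ 2 = 2) (hs2' : 1 ≤ s2) :
    (2 * s2 - 2) * w ≤ a + 4 * g + 2 * b + 2 * w := by
  have hw : w = h - g := by linarith
  have hs2le : s2 ≤ 2 := by nlinarith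
  have h42 : 0 ≤ (4 - 2 * s2) * h := mul_nonneg (by linarith) hh
  rcases le_or_gt 0 g with hg0 | hg0
  · have hsg : 0 ≤ 2 * s2 * g := mul_nonneg (by linarith) hg0
    nlinarith [hsg, h42]
  · have hA0 : 0 ≤ 2 * s2 * (-g) := mul_nonneg (by linarith) (by linarith)
    have hq : (2 * s2 * (-g)) ^ 2 = 8 * g ^ 2 := by
      have : (2 * s2 * (-g)) ^ 2 = 4 * s2 ^ 2 * g ^ 2 := by ring
      rw [this, hs2]; ring
    have h8 : 8 * g ^ 2 ≤ (a + 2 * b) ^ 2 := by nlinarith [hcs, sq_nonneg (a - 2 * b)]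
    have habs : 2 * s2 * (-g) ≤ a + 2 * b := by nlinarith [h8, hq]
    nlinarith [habs, h42]

end ProcrustesAux

open ProcrustesAux

set_option maxHeartbeats 3000000 in
/-- For a perfectly balanced pair `(U, V)` (i.e. `‖UᵀU − VᵀV‖_F = 0`) and the
balanced SVD factorization `Z*` of a rank-`r` matrix `L*` with smallest positive
singular value `σr`,
`d_P(Z, Z*) ≤ (√(2r)/√((√2 − 1)σr)) · ‖UVᵀ − L*‖_op`. -/
theorem procrustes_distance_op_norm_bound {n1 n2 r : ℕ}
    (Lstar : Matrix (Fin n1) (Fin n2) ℝ) (hrank : Lstar.rank = r)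
    (Uo : Matrix (Fin n1) (Fin r) ℝ) (Vo : Matrix (Fin n2) (Fin r) ℝ)
    (s : Fin r → ℝ) (hs : ∀ i, 0 < s i)
    (hUo : Uoᵀ * Uo = 1) (hVo : Voᵀ * Vo = 1)
    (hL : Lstar = Uo * Matrix.diagonal s * Voᵀ)
    (σr : ℝ) (hσr : IsLeast (Set.range s) σr)
    (U : Matrix (Fin n1) (Fin r) ℝ) (V : Matrix (Fin n2) (Fin r) ℝ)
    (hbal : frob (Uᵀ * U - Vᵀ * V) = 0) :
    dP (Matrix.fromRows U V)
        (Matrix.fromRows (Uo * Matrix.diagonal fun i => Real.sqrt (s i))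
          (Vo * Matrix.diagonal fun i => Real.sqrt (s i))) ≤
      (Real.sqrt (2 * r) / Real.sqrt ((Real.sqrt 2 - 1) * σr)) *
        opNorm (U * Vᵀ - Lstar) := by
    classical
  obtain ⟨i₀, hi₀⟩ := hσr.1
  have hσpos : 0 < σr := hi₀ ▸ hs i₀
  have hσle : ∀ i, σr ≤ s i := fun i => hσr.2 ⟨i, rfl⟩
  set Sg : Matrix (Fin r) (Fin r) ℝ := Matrix.diagonal fun i => Real.sqrt (s i) with hSg
  set Us := Uo * Sg with hUs
  set Vs := Vo * Sg with hVs
  set Z := Matrix.fromRows U V with hZdef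
  set Zs := Matrix.fromRows Us Vs with hZsdef
  set E := U * Vᵀ - Lstar with hEdef
  -- balancedness
  have hUV : Uᵀ * U = Vᵀ * V := sub_eq_zero.mp (eq_zero_of_frob_eq_zero hbal)
  have hSgSg : Sg * Sg = Matrix.diagonal s := by
    rw [hSg, Matrix.diagonal_mul_diagonal,
      show (fun i => Real.sqrt (s i) * Real.sqrt (s i)) = s from
        funext fun i => Real.mul_self_sqrt (hs i).le]
  have hSgT : Sgᵀ = Sg := Matrix.diagonal_transpose _
  have hUsUs : Usᵀ * Us = Matrix.diagonal s := by
    rw [hUs, Matrix.transpose_mul, hSgT]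
    calc Sg * Uoᵀ * (Uo * Sg) = Sg * (Uoᵀ * Uo) * Sg := by simp [Matrix.mul_assoc]
      _ = Sg * Sg := by rw [hUo, Matrix.mul_one]
      _ = Matrix.diagonal s := hSgSg
  have hVsVs : Vsᵀ * Vs = Matrix.diagonal s := by
    rw [hVs, Matrix.transpose_mul, hSgT]
    calc Sg * Voᵀ * (Vo * Sg) = Sg * (Voᵀ * Vo) * Sg := by simp [Matrix.mul_assoc]
      _ = Sg * Sg := by rw [hVo, Matrix.mul_one]
      _ = Matrix.diagonal s := hSgSg
  have hLs : Lstar = Us * Vsᵀ := by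
    rw [hUs, hVs, Matrix.transpose_mul, hSgT, hL]
    calc Uo * Matrix.diagonal s * Voᵀ = Uo * (Sg * Sg) * Voᵀ := by rw [hSgSg]
      _ = Uo * Sg * (Sg * Voᵀ) := by simp [Matrix.mul_assoc]
  have hE2 : E = U * Vᵀ - Us * Vsᵀ := by rw [hEdef, hLs]
  have hZsZs : Zsᵀ * Zs = Matrix.diagonal (fun i => 2 * s i) := by
    rw [hZsdef, Matrix.transpose_fromRows, Matrix.fromCols_mul_fromRows, hUsUs, hVsVs,
      Matrix.diagonal_add,
      show (fun i => s i + s i) = (fun i => 2 * s i) from funext fun i => by ring]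
  have hZZt : Zᵀ * Z = Uᵀ * U + Vᵀ * V := by
    rw [hZdef, Matrix.transpose_fromRows, Matrix.fromCols_mul_fromRows]
  -- choose the aligning orthogonal matrix by polar decomposition
  obtain ⟨P, hP, hPSD⟩ := exists_polar (Zᵀ * Zs)
  set H := Zᵀ * Zs * P with hHdef
  set R := Zs * P with hRdef
  set Δ := Z - R with hΔdef
  have hHR : Δᵀ * R = H - Rᵀ * R := by
    rw [hΔdef, Matrix.transpose_sub, Matrix.sub_mul, hHdef, hRdef, Matrix.mul_assoc]
  set S := Δᵀ * R with hSdef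
  have hPPT : P * Pᵀ = 1 := mul_eq_one_comm.mp hP
  have hHsym : Hᵀ = H := by
    have h1 : Hᴴ = H := hPSD.1
    rwa [Matrix.conjTranspose_eq_transpose_of_trivial] at h1
  have hSsym : Sᵀ = S := by
    rw [hHR, Matrix.transpose_sub, hHsym, Matrix.transpose_mul, Matrix.transpose_transpose]
  have hST : Sᵀ = Rᵀ * Δ := by rw [hSdef, Matrix.transpose_mul, Matrix.transpose_transpose]
  -- decomposition of the difference of gram matrices
  have hRRt : R * Rᵀ = Zs * Zsᵀ := by
    rw [hRdef, Matrix.transpose_mul]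
    calc Zs * P * (Pᵀ * Zsᵀ) = Zs * (P * Pᵀ) * Zsᵀ := by simp [Matrix.mul_assoc]
      _ = Zs * Zsᵀ := by rw [hPPT, Matrix.mul_one]
  have hZ : Z = Δ + R := by rw [hΔdef]; abel
  have hD : Z * Zᵀ - Zs * Zsᵀ = Δ * Δᵀ + Δ * Rᵀ + R * Δᵀ := by
    rw [← hRRt]
    calc Z * Zᵀ - R * Rᵀ = (Δ + R) * (Δ + R)ᵀ - R * Rᵀ := by rw [← hZ]
      _ = Δ * Δᵀ + Δ * Rᵀ + R * Δᵀ := by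
          rw [Matrix.transpose_add, Matrix.mul_add, Matrix.add_mul, Matrix.add_mul]
          abel
  -- the nine-term expansion of the squared Frobenius norm
  have hDD : (Δ * Δᵀ + Δ * Rᵀ + R * Δᵀ) * (Δ * Δᵀ + Δ * Rᵀ + R * Δᵀ) =
      Δ * Δᵀ * (Δ * Δᵀ) + Δ * Δᵀ * (Δ * Rᵀ) + Δ * Δᵀ * (R * Δᵀ)
      + (Δ * Rᵀ * (Δ * Δᵀ) + Δ * Rᵀ * (Δ * Rᵀ) + Δ * Rᵀ * (R * Δᵀ))
      + (R * Δᵀ * (Δ * Δᵀ) + R * Δᵀ * (Δ * Rᵀ) + R * Δᵀ * (R * Δᵀ)) := by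
    rw [Matrix.add_mul, Matrix.add_mul, Matrix.mul_add, Matrix.mul_add, Matrix.mul_add,
      Matrix.mul_add, Matrix.mul_add, Matrix.mul_add]
  have hT1 : Matrix.trace (Δ * Δᵀ * (Δ * Δᵀ)) = Matrix.trace ((Δᵀ * Δ) * (Δᵀ * Δ)) :=
    trace4 Δ Δ Δ Δ
  have hT2 : Matrix.trace (Δ * Δᵀ * (Δ * Rᵀ)) = Matrix.trace ((Δᵀ * Δ) * S) := by
    rw [trace4 Δ Δ Δ R, Matrix.trace_mul_comm, ← hST, hSsym]
  have hT3 : Matrix.trace (Δ * Δᵀ * (R * Δᵀ)) = Matrix.trace ((Δᵀ * Δ) * S) := by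
    rw [trace4 Δ Δ R Δ, ← hSdef]
  have hT4 : Matrix.trace (Δ * Rᵀ * (Δ * Δᵀ)) = Matrix.trace ((Δᵀ * Δ) * S) := by
    rw [trace4 Δ R Δ Δ, ← hST, hSsym]
  have hT5 : Matrix.trace (Δ * Rᵀ * (Δ * Rᵀ)) = Matrix.trace (Sᵀ * S) := by
    rw [trace4 Δ R Δ R, ← hST]
    nth_rewrite 2 [hSsym]
    rfl
  have hT6 : Matrix.trace (Δ * Rᵀ * (R * Δᵀ)) = Matrix.trace ((Δᵀ * Δ) * (Rᵀ * R)) :=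
    trace4 Δ R R Δ
  have hT7 : Matrix.trace (R * Δᵀ * (Δ * Δᵀ)) = Matrix.trace ((Δᵀ * Δ) * S) := by
    rw [trace4 R Δ Δ Δ, ← hSdef, Matrix.trace_mul_comm]
  have hT8 : Matrix.trace (R * Δᵀ * (Δ * Rᵀ)) = Matrix.trace ((Δᵀ * Δ) * (Rᵀ * R)) := by
    rw [trace4 R Δ Δ R, Matrix.trace_mul_comm]
  have hT9 : Matrix.trace (R * Δᵀ * (R * Δᵀ)) = Matrix.trace (Sᵀ * S) := by
    rw [trace4 R Δ R Δ, ← hSdef]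
    nth_rewrite 1 [← hSsym]
    rfl
  have hF2exp : Matrix.trace ((Z * Zᵀ - Zs * Zsᵀ) * (Z * Zᵀ - Zs * Zsᵀ)) =
      Matrix.trace ((Δᵀ * Δ) * (Δᵀ * Δ)) + 4 * Matrix.trace ((Δᵀ * Δ) * S)
      + 2 * Matrix.trace (Sᵀ * S) + 2 * Matrix.trace ((Δᵀ * Δ) * (Rᵀ * R)) := by
    rw [hD, hDD]
    simp only [Matrix.trace_add]
    rw [hT1, hT2, hT3, hT4, hT5, hT6, hT7, hT8, hT9]
    ring
  -- positivity facts
  have hApos : 0 ≤ Matrix.trace ((Δᵀ * Δ) * (Δᵀ * Δ)) := by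
    have h1 : (Δᵀ * Δ)ᵀ = Δᵀ * Δ := by
      rw [Matrix.transpose_mul, Matrix.transpose_transpose]
    have h2 := e2_nonneg (Δᵀ * Δ)
    rw [e2, h1] at h2
    exact h2
  have hBpos : 0 ≤ Matrix.trace (Sᵀ * S) := e2_nonneg S
  have hCS : (Matrix.trace ((Δᵀ * Δ) * S)) ^ 2
      ≤ Matrix.trace ((Δᵀ * Δ) * (Δᵀ * Δ)) * Matrix.trace (Sᵀ * S) := by
    have h1 : (Δᵀ * Δ)ᵀ = Δᵀ * Δ := by
      rw [Matrix.transpose_mul, Matrix.transpose_transpose]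
    have h2 := trace_CS (Δᵀ * Δ) S
    rw [e2, e2, h1] at h2
    exact h2
  have hΔPSD : (Δᵀ * Δ).PosSemidef := posSemidef_transpose_mul_self Δ
  have hH0 : 0 ≤ Matrix.trace ((Δᵀ * Δ) * H) := trace_mul_psd_nonneg hΔPSD hPSD
  have hgdec : Matrix.trace ((Δᵀ * Δ) * S)
      = Matrix.trace ((Δᵀ * Δ) * H) - Matrix.trace ((Δᵀ * Δ) * (Rᵀ * R)) := by
    rw [hHR, Matrix.mul_sub, Matrix.trace_sub]
  -- lower bound for the w-term
  have hRTR : Rᵀ * R = Pᵀ * Matrix.diagonal (fun i => 2 * s i) * P := by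
    rw [hRdef, Matrix.transpose_mul, ← hZsZs]
    simp [Matrix.mul_assoc]
  have hwlow : 2 * σr * Matrix.trace (Δᵀ * Δ) ≤ Matrix.trace ((Δᵀ * Δ) * (Rᵀ * R)) := by
    rw [hRTR]
    have e1 : (Δᵀ * Δ) * (Pᵀ * Matrix.diagonal (fun i => 2 * s i) * P)
        = ((Δᵀ * Δ) * (Pᵀ * Matrix.diagonal (fun i => 2 * s i))) * P := by
      simp [Matrix.mul_assoc]
    rw [e1, Matrix.trace_mul_comm ((Δᵀ * Δ) * (Pᵀ * Matrix.diagonal (fun i => 2 * s i))) P,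
      show P * ((Δᵀ * Δ) * (Pᵀ * Matrix.diagonal (fun i => 2 * s i)))
        = (P * (Δᵀ * Δ) * Pᵀ) * Matrix.diagonal (fun i => 2 * s i) from by
          simp [Matrix.mul_assoc],
      trace_mul_diagonal']
    have hCform : P * (Δᵀ * Δ) * Pᵀ = (Δ * Pᵀ)ᵀ * (Δ * Pᵀ) := by
      rw [Matrix.transpose_mul, Matrix.transpose_transpose]
      simp [Matrix.mul_assoc]
    have hdiagnn : ∀ i, 0 ≤ (P * (Δᵀ * Δ) * Pᵀ) i i := by
      intro i
      rw [hCform, Matrix.mul_apply]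
      exact Finset.sum_nonneg fun j _ => by
        rw [Matrix.transpose_apply]; exact mul_self_nonneg _
    have htrC : ∑ i, (P * (Δᵀ * Δ) * Pᵀ) i i = Matrix.trace (Δᵀ * Δ) := by
      have h1 : ∑ i, (P * (Δᵀ * Δ) * Pᵀ) i i = Matrix.trace (P * (Δᵀ * Δ) * Pᵀ) := rfl
      rw [h1, Matrix.trace_mul_comm,
        show Pᵀ * (P * (Δᵀ * Δ)) = (Pᵀ * P) * (Δᵀ * Δ) from by simp [Matrix.mul_assoc],
        hP, Matrix.one_mul]
    calc 2 * σr * Matrix.trace (Δᵀ * Δ) = ∑ i, (P * (Δᵀ * Δ) * Pᵀ) i i * (2 * σr) := by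
          rw [← Finset.sum_mul, htrC]; ring
      _ ≤ ∑ i, (P * (Δᵀ * Δ) * Pᵀ) i i * (2 * s i) :=
          Finset.sum_le_sum fun i _ => mul_le_mul_of_nonneg_left
            (by have := hσle i; linarith) (hdiagnn i)
  -- the GJZ inequality
  have hs2 : (Real.sqrt 2) ^ 2 = 2 := Real.sq_sqrt (by norm_num)
  have hs2' : 1 ≤ Real.sqrt 2 := by nlinarith [Real.sqrt_nonneg 2]
  have hGJZ : (2 * Real.sqrt 2 - 2) * Matrix.trace ((Δᵀ * Δ) * (Rᵀ * R))
      ≤ Matrix.trace ((Z * Zᵀ - Zs * Zsᵀ) * (Z * Zᵀ - Zs * Zsᵀ)) := by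
    rw [hF2exp]
    exact gjz_scalar _ _ _ _ _ _ hApos hBpos hH0 hgdec hCS hs2 hs2'
  -- the balance comparison: F2 ≤ 4 * e2 E
  set X := Uᵀ * Us with hXdef
  set Y := Vᵀ * Vs with hYdef
  have hN : Zᵀ * Zs = X + Y := by
    rw [hZdef, hZsdef, Matrix.transpose_fromRows, Matrix.fromCols_mul_fromRows]
  have hDDexp : Matrix.trace ((Z * Zᵀ - Zs * Zsᵀ) * (Z * Zᵀ - Zs * Zsᵀ)) =
      Matrix.trace (Z * Zᵀ * (Z * Zᵀ)) - 2 * Matrix.trace (Z * Zᵀ * (Zs * Zsᵀ))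
      + Matrix.trace (Zs * Zsᵀ * (Zs * Zsᵀ)) := by
    rw [Matrix.sub_mul, Matrix.mul_sub, Matrix.mul_sub, Matrix.trace_sub, Matrix.trace_sub,
      Matrix.trace_sub, Matrix.trace_mul_comm (Zs * Zsᵀ) (Z * Zᵀ)]
    ring
  have hterm1 : Matrix.trace (Z * Zᵀ * (Z * Zᵀ)) = 4 * Matrix.trace ((Uᵀ * U) * (Uᵀ * U)) := by
    rw [trace4 Z Z Z Z, hZZt, ← hUV]
    simp only [Matrix.add_mul, Matrix.mul_add, Matrix.trace_add]
    ring
  have hterm3 : Matrix.trace (Zs * Zsᵀ * (Zs * Zsᵀ)) = 4 * (∑ i, s i * s i) := by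
    rw [trace4 Zs Zs Zs Zs, hZsZs, Matrix.diagonal_mul_diagonal, Matrix.trace_diagonal]
    rw [show ∑ i, 2 * s i * (2 * s i) = ∑ i, 4 * (s i * s i) from
      Finset.sum_congr rfl fun i _ => by ring, ← Finset.mul_sum]
  have htrYX : Matrix.trace (Y * Xᵀ) = Matrix.trace (X * Yᵀ) := by
    rw [← Matrix.trace_transpose (Y * Xᵀ), Matrix.transpose_mul, Matrix.transpose_transpose]
  have hterm2 : Matrix.trace (Z * Zᵀ * (Zs * Zsᵀ)) =
      Matrix.trace (X * Xᵀ) + 2 * Matrix.trace (X * Yᵀ) + Matrix.trace (Y * Yᵀ) := by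
    rw [trace4 Z Z Zs Zs]
    have h1 : Zsᵀ * Z = (X + Y)ᵀ := by
      rw [← hN, Matrix.transpose_mul, Matrix.transpose_transpose]
    rw [h1, hN, Matrix.transpose_add, Matrix.add_mul, Matrix.mul_add, Matrix.mul_add]
    simp only [Matrix.trace_add]
    rw [Matrix.trace_mul_comm Xᵀ X, Matrix.trace_mul_comm Xᵀ Y, Matrix.trace_mul_comm Yᵀ Y,
      Matrix.trace_mul_comm Yᵀ X, htrYX]
    ring
  have hXT : Xᵀ = Usᵀ * U := by rw [hXdef, Matrix.transpose_mul, Matrix.transpose_transpose]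
  have hYT : Yᵀ = Vsᵀ * V := by rw [hYdef, Matrix.transpose_mul, Matrix.transpose_transpose]
  have heE : Matrix.trace (Eᵀ * E) = Matrix.trace ((Uᵀ * U) * (Uᵀ * U)) + (∑ i, s i * s i)
      - 2 * Matrix.trace (X * Yᵀ) := by
    rw [hE2, Matrix.transpose_sub, Matrix.sub_mul, Matrix.mul_sub, Matrix.mul_sub,
      Matrix.trace_sub, Matrix.trace_sub, Matrix.trace_sub]
    simp only [Matrix.transpose_mul, Matrix.transpose_transpose]
    rw [trace4 V U U V, trace4 V U Us Vs, trace4 Vs Us U V, trace4 Vs Us Us Vs]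
    rw [hUsUs, hVsVs, ← hUV, ← hXdef, ← hYdef, ← hXT, ← hYT]
    rw [Matrix.diagonal_mul_diagonal, Matrix.trace_diagonal]
    rw [Matrix.trace_mul_comm Yᵀ X, htrYX, Matrix.trace_mul_comm (Uᵀ * U) (Uᵀ * U)]
    have hc2 : Matrix.trace (Xᵀ * Y) = Matrix.trace (X * Yᵀ) := by
      rw [← Matrix.trace_transpose (Xᵀ * Y), Matrix.transpose_mul, Matrix.transpose_transpose,
        Matrix.trace_mul_comm]
    ring
  have hbalpos : 0 ≤ Matrix.trace (X * Xᵀ) - 2 * Matrix.trace (X * Yᵀ)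
      + Matrix.trace (Y * Yᵀ) := by
    have h0 := e2_nonneg (X - Y)
    rw [e2, Matrix.transpose_sub, Matrix.sub_mul, Matrix.mul_sub, Matrix.mul_sub,
      Matrix.trace_sub, Matrix.trace_sub, Matrix.trace_sub, Matrix.trace_mul_comm Xᵀ X,
      Matrix.trace_mul_comm Xᵀ Y, Matrix.trace_mul_comm Yᵀ Y, Matrix.trace_mul_comm Yᵀ X,
      htrYX] at h0
    linarith
  have hF2le : Matrix.trace ((Z * Zᵀ - Zs * Zsᵀ) * (Z * Zᵀ - Zs * Zsᵀ))
      ≤ 4 * Matrix.trace (Eᵀ * E) := by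
    rw [hDDexp, hterm1, hterm2, hterm3, heE]
    linarith
  -- rank bound / operator norm
  have hrankE : ((E.rank : ℝ)) ≤ 2 * r := by
    have h1 : E.rank ≤ (U * Vᵀ).rank + Lstar.rank := by
      rw [hEdef]; exact rank_sub_le _ _
    have h2 : (U * Vᵀ).rank ≤ r := by
      refine le_trans (Matrix.rank_mul_le_left U Vᵀ) ?_
      simpa using Matrix.rank_le_card_width U
    rw [hrank] at h1
    have h3 : E.rank ≤ 2 * r := by omega
    exact_mod_cast h3
  have heEb : e2 E ≤ (2 * r) * opNorm E ^ 2 :=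
    le_trans (e2_le_rank_mul E) (mul_le_mul_of_nonneg_right hrankE (sq_nonneg _))
  -- conclusion
  have hdP : dP Z Zs ≤ frob Δ := by
    apply csInf_le
    · refine ⟨0, ?_⟩
      rintro d ⟨Q, hQ, rfl⟩
      exact frob_nonneg _
    · exact ⟨P, hP, by rw [hΔdef, hRdef]⟩
  have h1lt : 1 < Real.sqrt 2 := by nlinarith [hs2, Real.sqrt_nonneg 2]
  have hcpos : 0 < (Real.sqrt 2 - 1) * σr := mul_pos (by linarith) hσpos
  have he2E : Matrix.trace (Eᵀ * E) = e2 E := rfl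
  have hd2c : ((Real.sqrt 2 - 1) * σr) * e2 Δ ≤ (2 * r) * opNorm E ^ 2 := by
    have k1 : (2 * Real.sqrt 2 - 2) * (2 * σr * Matrix.trace (Δᵀ * Δ))
        ≤ (2 * Real.sqrt 2 - 2) * Matrix.trace ((Δᵀ * Δ) * (Rᵀ * R)) :=
      mul_le_mul_of_nonneg_left hwlow (by linarith)
    have k2 : (2 * Real.sqrt 2 - 2) * (2 * σr * Matrix.trace (Δᵀ * Δ))
        = 4 * (((Real.sqrt 2 - 1) * σr) * Matrix.trace (Δᵀ * Δ)) := by ring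
    have k5 : e2 Δ = Matrix.trace (Δᵀ * Δ) := rfl
    rw [k5]
    linarith [hGJZ, hF2le, heEb, he2E ▸ heEb]
  calc dP Z Zs ≤ frob Δ := hdP
    _ = Real.sqrt (e2 Δ) := frob_eq Δ
    _ ≤ (Real.sqrt (2 * r) / Real.sqrt ((Real.sqrt 2 - 1) * σr)) * opNorm E := by
        have h1 : e2 Δ ≤ ((2 * r) * opNorm E ^ 2) / ((Real.sqrt 2 - 1) * σr) := by
          rw [le_div_iff₀ hcpos]
          calc e2 Δ * ((Real.sqrt 2 - 1) * σr) = ((Real.sqrt 2 - 1) * σr) * e2 Δ := by ring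
            _ ≤ (2 * r) * opNorm E ^ 2 := hd2c
        calc Real.sqrt (e2 Δ)
            ≤ Real.sqrt (((2 * r) * opNorm E ^ 2) / ((Real.sqrt 2 - 1) * σr)) :=
              Real.sqrt_le_sqrt h1
          _ = Real.sqrt ((2 * r) * opNorm E ^ 2) / Real.sqrt ((Real.sqrt 2 - 1) * σr) :=
              Real.sqrt_div (by positivity) _
          _ = (Real.sqrt (2 * r) * opNorm E) / Real.sqrt ((Real.sqrt 2 - 1) * σr) := by
              rw [Real.sqrt_mul (by positivity), Real.sqrt_sq (opNorm_nonneg E)]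
          _ = (Real.sqrt (2 * r) / Real.sqrt ((Real.sqrt 2 - 1) * σr)) * opNorm E := by
              ring
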